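/- Let W be a stochastic matrix from a finite set X to pmfs on a finite set Y, and for α ∈ (0,1) let W_α(·|x) be the order-α selftilted channel. Then for every α ∈ (0,1) and x ∈ X, D_1(W_α(·|x) ‖ q_{α,W}) ≤ D_α(W(·|x) ‖ q_{α,W}) ≤ C_α(W). -/

import Mathlib

open Real MeasureTheory Filter

def IsPMF {Y : Type*} [Fintype Y] (W : Y → ℝ) : Prop :=
  (∀ y, 0 ≤ W y) ∧ ∑ y, W y = 1

noncomputable def renyiDiv {Y : Type*} [Fintype Y] (α : ℝ) (W Q : Y → ℝ) : ℝ :=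
  if α = 1 then ∑ y, W y * Real.log (W y / Q y)
  else (α - 1)⁻¹ * Real.log (∑ y, W y ^ α * Q y ^ (1 - α))

open Classical in
/-- Extended-real-valued order-`α` Rényi divergence, taking the value `⊤` when the
divergence is infinite. -/
noncomputable def renyiDivE {Y : Type*} [Fintype Y] (α : ℝ) (W Q : Y → ℝ) : ENNReal :=
  if α = 1 then
    (if ∀ y, Q y = 0 → W y = 0 then ENNReal.ofReal (renyiDiv 1 W Q) else ⊤)
  else
    (if 0 < ∑ y, W y ^ α * Q y ^ (1 - α) then ENNReal.ofReal (renyiDiv α W Q) else ⊤)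

/-- The order-`α` tilted pmf `W^α_Q`. -/
noncomputable def tilt {Y : Type*} [Fintype Y] (α : ℝ) (W Q : Y → ℝ) : Y → ℝ :=
  fun y => Real.exp ((1 - α) * renyiDiv α W Q) * W y ^ α * Q y ^ (1 - α)

/-- The order-`α` Rényi information `I_α(P;W)` (mutual information for `α = 1`). -/
noncomputable def renyiInfo {X Y : Type*} [Fintype X] [Fintype Y] (α : ℝ) (P : X → ℝ)
    (W : X → Y → ℝ) : ℝ :=
  if α = 1 then ∑ x, P x * ∑ y, W x y * Real.log (W x y / (∑ x', P x' * W x' y))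
  else (α / (α - 1)) * Real.log (∑ y, (∑ x, P x * W x y ^ α) ^ α⁻¹)

/-- The order-`α` Rényi capacity `C_α(W) = sup_P I_α(P;W)`. -/
noncomputable def renyiCap {X Y : Type*} [Fintype X] [Fintype Y] (α : ℝ) (W : X → Y → ℝ) : ℝ :=
  sSup {c | ∃ P : X → ℝ, IsPMF P ∧ c = renyiInfo α P W}

/-- The sphere packing exponent `E_sp(R,W)`. -/
noncomputable def spe {X Y : Type*} [Fintype X] [Fintype Y] (R : ℝ) (W : X → Y → ℝ) : ℝ :=
  sSup {e | ∃ α ∈ Set.Ioo (0:ℝ) 1, e = ((1 - α) / α) * (renyiCap α W - R)}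

/-- The order-`α` Rényi mean `q_{α,P}`. -/
noncomputable def renyiMean {X Y : Type*} [Fintype X] [Fintype Y] (α : ℝ) (P : X → ℝ)
    (W : X → Y → ℝ) : Y → ℝ :=
  fun y => (∑ x, P x * W x y ^ α) ^ α⁻¹ / ∑ y', (∑ x, P x * W x y' ^ α) ^ α⁻¹

/-- `D_1(W_α(·|x)‖q_{α,W}) ≤ D_α(W(·|x)‖q_{α,W}) ≤ C_α(W)`. -/
theorem selftilt_div_le_cap {X Y : Type*} [Fintype X] [Fintype Y] [Nonempty X]
    (α : ℝ) (hα : α ∈ Set.Ioo (0:ℝ) 1) (W : X → Y → ℝ) (hW : ∀ x, IsPMF (W x))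
    (q : Y → ℝ) (hq : IsPMF q)
    (hcenter : (⨆ x, renyiDivE α (W x) q) = ENNReal.ofReal (renyiCap α W)) (x : X) :
    renyiDiv 1 (tilt α (W x) q) q ≤ renyiDiv α (W x) q ∧
    renyiDiv α (W x) q ≤ renyiCap α W := by
  classical
  obtain ⟨hα0, hα1⟩ := hα
  have hαne : α ≠ 1 := ne_of_lt hα1
  have hα1ne : α - 1 ≠ 0 := by intro h; apply hαne; linarith
  have hWx := hW x
  set S := ∑ y, W x y ^ α * q y ^ (1 - α) with hSdef
  have hterm : ∀ y, 0 ≤ W x y ^ α * q y ^ (1 - α) := fun y =>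
    mul_nonneg (Real.rpow_nonneg (hWx.1 y) _) (Real.rpow_nonneg (hq.1 y) _)
  have hS0 : 0 ≤ S := Finset.sum_nonneg fun y _ => hterm y
  have hS1 : S ≤ 1 := by
    calc S ≤ ∑ y, (α * W x y + (1 - α) * q y) := Finset.sum_le_sum fun y _ =>
          Real.geom_mean_le_arith_mean2_weighted hα0.le (by linarith) (hWx.1 y) (hq.1 y)
            (by ring)
      _ = α * 1 + (1 - α) * 1 := by
          rw [Finset.sum_add_distrib, ← Finset.mul_sum, ← Finset.mul_sum, hWx.2, hq.2]
      _ = 1 := by ring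
  have hDval : renyiDiv α (W x) q = (α - 1)⁻¹ * Real.log S := by
    simp [renyiDiv, hαne, hSdef]
  have hD0 : 0 ≤ renyiDiv α (W x) q := by
    rw [hDval]
    have h1 : Real.log S ≤ 0 := Real.log_nonpos hS0 hS1
    have h2 : (α - 1)⁻¹ ≤ 0 := by
      apply inv_nonpos.mpr; linarith
    nlinarith [mul_nonneg (neg_nonneg.mpr h2) (neg_nonneg.mpr h1)]
  -- from hcenter
  have hle : renyiDivE α (W x) q ≤ ENNReal.ofReal (renyiCap α W) := by
    rw [← hcenter]; exact le_iSup (fun x => renyiDivE α (W x) q) x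
  have hSpos : 0 < S := by
    by_contra h
    have hE : renyiDivE α (W x) q = ⊤ := by
      rw [renyiDivE, if_neg hαne, if_neg h]
    rw [hE, top_le_iff] at hle
    exact ENNReal.ofReal_ne_top hle
  have hEeq : renyiDivE α (W x) q = ENNReal.ofReal (renyiDiv α (W x) q) := by
    rw [renyiDivE, if_neg hαne, if_pos hSpos]
  -- capacity is nonnegative
  have hc0 : 0 ≤ renyiCap α W := by
    apply Real.sSup_nonneg'
    obtain ⟨x0⟩ := ‹Nonempty X›
    refine ⟨renyiInfo α (fun x' => if x' = x0 then 1 else 0) W,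
      ⟨_, ⟨fun x' => by positivity, by simp⟩, rfl⟩, ?_⟩
    have hin : ∀ y, (∑ x', (if x' = x0 then (1:ℝ) else 0) * W x' y ^ α) ^ α⁻¹ = W x0 y := by
      intro y
      simp only [ite_mul, one_mul, zero_mul]
      rw [Finset.sum_ite_eq' Finset.univ x0 (fun x' => W x' y ^ α)]
      simp only [Finset.mem_univ, if_true, one_mul]
      rw [← Real.rpow_mul ((hW x0).1 y), mul_inv_cancel₀ (ne_of_gt hα0), Real.rpow_one]
    rw [renyiInfo, if_neg hαne]
    simp only [hin]
    rw [(hW x0).2, Real.log_one, mul_zero]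
  have hcap : renyiDiv α (W x) q ≤ renyiCap α W := by
    rw [hEeq] at hle
    exact (ENNReal.ofReal_le_ofReal_iff hc0).mp hle
  refine ⟨?_, hcap⟩
  -- first inequality
  set t := tilt α (W x) q with htdef
  have hexp : Real.exp ((1 - α) * renyiDiv α (W x) q) = S⁻¹ := by
    rw [hDval]
    have h1 : (1 - α) * ((α - 1)⁻¹ * Real.log S) = -Real.log S := by
      field_simp
      ring
    rw [h1, Real.exp_neg, Real.exp_log hSpos]
  have ht : ∀ y, t y = W x y ^ α * q y ^ (1 - α) / S := by
    intro y
    simp only [htdef, tilt, hexp]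
    ring
  have htnn : ∀ y, 0 ≤ t y := fun y => by
    rw [ht y]; exact div_nonneg (hterm y) hS0
  have htsum : ∑ y, t y = 1 := by
    simp only [ht]
    rw [← Finset.sum_div, ← hSdef, div_self (ne_of_gt hSpos)]
  have hsupp : ∀ y, t y ≠ 0 → 0 < W x y ∧ 0 < q y := by
    intro y hy
    constructor
    · rcases (hWx.1 y).lt_or_eq with h | h
      · exact h
      · exfalso; apply hy; rw [ht y, ← h, Real.zero_rpow (ne_of_gt hα0), zero_mul, zero_div]
    · rcases (hq.1 y).lt_or_eq with h | h
      · exact h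
      · exfalso; apply hy
        rw [ht y, ← h, Real.zero_rpow (by intro hh; apply hαne; linarith), mul_zero, zero_div]
  -- Gibbs inequality
  have hGibbs : 0 ≤ ∑ y, t y * Real.log (t y / W x y) := by
    have hpt : ∀ y ∈ Finset.univ, t y - W x y ≤ t y * Real.log (t y / W x y) := by
      intro y _
      rcases eq_or_ne (t y) 0 with h | h
      · rw [h]; simp only [zero_mul, zero_sub, neg_nonpos]
        exact hWx.1 y
      · have htpos : 0 < t y := lt_of_le_of_ne (htnn y) (Ne.symm h)
        have hWpos := (hsupp y h).1
        have hlog := Real.log_le_sub_one_of_pos (show 0 < W x y / t y by positivity)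
        have hflip : Real.log (t y / W x y) = -Real.log (W x y / t y) := by
          rw [← Real.log_inv]
          congr 1
          field_simp
        rw [hflip]
        have h2 : W x y / t y - 1 = (W x y - t y) / t y := by field_simp
        rw [h2] at hlog
        have h3 : -((W x y - t y) / t y) ≤ -Real.log (W x y / t y) := neg_le_neg hlog
        calc t y - W x y = t y * (-((W x y - t y) / t y)) := by field_simp; ring
          _ ≤ t y * -Real.log (W x y / t y) := by
              exact mul_le_mul_of_nonneg_left h3 htpos.le
    calc (0:ℝ) = ∑ y, (t y - W x y) := by
          rw [Finset.sum_sub_distrib, htsum, hWx.2, sub_self]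
      _ ≤ _ := Finset.sum_le_sum hpt
  -- pointwise identity
  have hkey : ∀ y, t y * Real.log (t y / q y) =
      (α / (α - 1)) * (t y * Real.log (t y / W x y)) + ((α - 1)⁻¹ * Real.log S) * t y := by
    intro y
    rcases eq_or_ne (t y) 0 with h | h
    · rw [h]; simp
    · obtain ⟨hWp, hqp⟩ := hsupp y h
      have hlogt : Real.log (t y) =
          α * Real.log (W x y) + (1 - α) * Real.log (q y) - Real.log S := by
        rw [ht y, Real.log_div (by positivity) (ne_of_gt hSpos),
          Real.log_mul (by positivity) (by positivity), Real.log_rpow hWp, Real.log_rpow hqp]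
      rw [Real.log_div h (ne_of_gt hqp), Real.log_div h (ne_of_gt hWp), hlogt]
      field_simp
      ring
  have h1eq : renyiDiv 1 t q =
      (α / (α - 1)) * (∑ y, t y * Real.log (t y / W x y)) + (α - 1)⁻¹ * Real.log S := by
    rw [renyiDiv, if_pos rfl]
    calc ∑ y, t y * Real.log (t y / q y)
        = ∑ y, ((α / (α - 1)) * (t y * Real.log (t y / W x y))
            + ((α - 1)⁻¹ * Real.log S) * t y) := Finset.sum_congr rfl fun y _ => hkey y
      _ = (α / (α - 1)) * (∑ y, t y * Real.log (t y / W x y))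
            + ((α - 1)⁻¹ * Real.log S) * ∑ y, t y := by
          rw [Finset.sum_add_distrib, ← Finset.mul_sum, ← Finset.mul_sum]
      _ = _ := by rw [htsum, mul_one]
  rw [h1eq, hDval]
  have hneg : α / (α - 1) ≤ 0 := div_nonpos_of_nonneg_of_nonpos hα0.le (by linarith)
  nlinarith [mul_nonpos_of_nonpos_of_nonneg hneg hGibbs]
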